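/- The covariance function of fractional Brownian motion, γ_H(s,t) = ½(s^{2H} + t^{2H} − |t−s|^{2H}) for s,t ≥ 0 and H ∈ (0,1), is positive semidefinite: for any n, points t₁,…,tₙ ≥ 0 and reals c₁,…,cₙ, one has Σ_{i,j} c_i c_j γ_H(t_i, t_j) ≥ 0. -/

import Mathlib

/-- The fBm covariance function. -/
noncomputable def fbmCov (H : ℝ) (s t : ℝ) : ℝ :=
  (1 / 2) * (|s| ^ (2 * H) + |t| ^ (2 * H) - |t - s| ^ (2 * H))

open MeasureTheory Set Real

lemma one_sub_cos_nonneg (y : ℝ) : 0 ≤ 1 - Real.cos y := by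
  linarith [Real.cos_le_one y]

lemma one_sub_cos_le (y : ℝ) : 1 - Real.cos y ≤ y ^ 2 / 2 := by
  have h1 := Real.cos_two_mul (y / 2)
  rw [show 2 * (y / 2) = y by ring] at h1
  have h2 := Real.sin_sq_add_cos_sq (y / 2)
  have h3 : Real.sin (y / 2) ^ 2 ≤ (y / 2) ^ 2 := Real.sin_sq_le_sq
  nlinarith

lemma fbm_meas (H u : ℝ) :
    AEStronglyMeasurable (fun x : ℝ => (1 - Real.cos (u * x)) * x ^ (-1 - 2 * H))
      (volume.restrict (Ioi (0:ℝ))) := by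
  apply Measurable.aestronglyMeasurable
  fun_prop

lemma fbm_integrableOn (H : ℝ) (hH0 : 0 < H) (hH1 : H < 1) (u : ℝ) :
    IntegrableOn (fun x : ℝ => (1 - Real.cos (u * x)) * x ^ (-1 - 2 * H)) (Ioi 0) := by
  have hmeas := fbm_meas H u
  have hsplit : Ioc (0:ℝ) 1 ∪ Ioi 1 = Ioi 0 := Set.Ioc_union_Ioi_eq_Ioi zero_le_one
  rw [← hsplit]
  apply IntegrableOn.union
  · -- near 0 : dominate by (u^2/2) * x^(1-2H)
    have hdom : IntegrableOn (fun x : ℝ => u ^ 2 / 2 * x ^ (1 - 2 * H)) (Ioc 0 1) := by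
      apply Integrable.const_mul
      have : IntervalIntegrable (fun x : ℝ => x ^ (1 - 2 * H)) volume 0 1 :=
        intervalIntegral.intervalIntegrable_rpow' (by linarith)
      rwa [intervalIntegrable_iff_integrableOn_Ioc_of_le zero_le_one] at this
    refine Integrable.mono hdom (hmeas.mono_measure (Measure.restrict_mono (by
      intro x hx; exact hx.1) le_rfl)) ?_
    rw [ae_restrict_iff' measurableSet_Ioc]
    filter_upwards with x hx
    have hx0 : 0 < x := hx.1
    have hp : (0:ℝ) ≤ x ^ (-1 - 2 * H) := le_of_lt (Real.rpow_pos_of_pos hx0 _)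
    rw [Real.norm_eq_abs, Real.norm_eq_abs, abs_mul,
      abs_of_nonneg (one_sub_cos_nonneg _), abs_of_nonneg hp]
    have h1 : 1 - Real.cos (u * x) ≤ (u * x) ^ 2 / 2 := one_sub_cos_le _
    have h2 : (1 - Real.cos (u * x)) * x ^ (-1 - 2 * H) ≤
        ((u * x) ^ 2 / 2) * x ^ (-1 - 2 * H) := by
      exact mul_le_mul_of_nonneg_right h1 hp
    refine h2.trans (le_of_eq ?_)
    have hxx : x ^ (1 - 2*H) = x ^ (2:ℕ) * x ^ (-1 - 2*H) := by
      rw [← Real.rpow_natCast x 2, ← Real.rpow_add hx0]; congr 1; ring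
    rw [abs_of_nonneg (by positivity), hxx]
    ring
  · -- near ∞ : dominate by 2 * x^(-1-2H)
    have hdom : IntegrableOn (fun x : ℝ => 2 * x ^ (-1 - 2 * H)) (Ioi 1) := by
      apply Integrable.const_mul
      exact integrableOn_Ioi_rpow_of_lt (by linarith) zero_lt_one
    refine Integrable.mono hdom (hmeas.mono_measure (Measure.restrict_mono (by
      intro x hx; exact mem_Ioi.mpr (lt_trans zero_lt_one (mem_Ioi.mp hx))) le_rfl)) ?_
    rw [ae_restrict_iff' measurableSet_Ioi]
    filter_upwards with x hx
    have hx0 : (0:ℝ) < x := lt_trans zero_lt_one hx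
    have hp : (0:ℝ) ≤ x ^ (-1 - 2 * H) := le_of_lt (Real.rpow_pos_of_pos hx0 _)
    rw [Real.norm_eq_abs, Real.norm_eq_abs, abs_mul,
      abs_of_nonneg (one_sub_cos_nonneg _), abs_of_nonneg hp]
    rw [abs_of_nonneg (by positivity : (0:ℝ) ≤ 2 * x ^ (-1 - 2*H))]
    have : 1 - Real.cos (u * x) ≤ 2 := by linarith [Real.neg_one_le_cos (u * x)]
    exact mul_le_mul_of_nonneg_right this hp

noncomputable def fbmK (H u : ℝ) : ℝ :=
  ∫ x in Ioi (0:ℝ), (1 - Real.cos (u * x)) * x ^ (-1 - 2 * H)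

lemma fbmK_scale (H : ℝ) (hH0 : 0 < H) (u : ℝ) :
    fbmK H u = |u| ^ (2 * H) * fbmK H 1 := by
  rcases eq_or_ne u 0 with rfl | hu
  · simp [fbmK, Real.zero_rpow (by positivity : 2 * H ≠ 0)]
  · set a := |u| with ha
    have ha0 : 0 < a := abs_pos.mpr hu
    have hcos : ∀ x : ℝ, Real.cos (u * x) = Real.cos (a * x) := by
      intro x
      rcases abs_choice u with h | h
      · rw [ha, h]
      · rw [ha, h]; rw [neg_mul, Real.cos_neg]
    have key : fbmK H u = a ^ (1 + 2 * H) *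
        ∫ x in Ioi (0:ℝ), (1 - Real.cos (x * a)) * (x * a) ^ (-1 - 2 * H) := by
      rw [fbmK, ← integral_const_mul]
      apply setIntegral_congr_fun measurableSet_Ioi
      intro x hx
      have hx0 : 0 < x := hx
      show (1 - Real.cos (u * x)) * x ^ (-1 - 2 * H)
        = a ^ (1 + 2 * H) * ((1 - Real.cos (x * a)) * (x * a) ^ (-1 - 2 * H))
      rw [Real.mul_rpow (le_of_lt hx0) (le_of_lt ha0), hcos x]
      have : a ^ (1 + 2 * H) * a ^ (-1 - 2 * H) = 1 := by
        rw [← Real.rpow_add ha0]; norm_num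
      rw [mul_comm x a]
      calc (1 - Real.cos (a * x)) * x ^ (-1 - 2 * H)
          = (a ^ (1 + 2*H) * a ^ (-1-2*H)) * ((1 - Real.cos (a * x)) * x ^ (-1 - 2 * H)) := by
            rw [this, one_mul]
        _ = a ^ (1 + 2 * H) * ((1 - Real.cos (a * x)) * (x ^ (-1-2*H) * a ^ (-1-2*H))) := by ring
    rw [key, MeasureTheory.integral_comp_mul_right_Ioi
      (fun y => (1 - Real.cos y) * y ^ (-1 - 2 * H)) 0 ha0]
    rw [zero_mul, smul_eq_mul, ← mul_assoc]
    have : a ^ (1 + 2 * H) * a⁻¹ = a ^ (2 * H) := by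
      rw [← Real.rpow_neg_one a, ← Real.rpow_add ha0]; norm_num
    rw [this, fbmK]
    congr 1
    apply setIntegral_congr_fun measurableSet_Ioi
    intro x _
    norm_num

lemma fbmK_one_pos (H : ℝ) (hH0 : 0 < H) (hH1 : H < 1) : 0 < fbmK H 1 := by
  have hint := fbm_integrableOn H hH0 hH1 1
  set c : ℝ := π ^ (-1 - 2 * H) with hc
  have hcpos : 0 < c := Real.rpow_pos_of_pos Real.pi_pos _
  have hsub : Ioc (π/2) π ⊆ Ioi (0:ℝ) := by
    intro x hx
    have := Real.pi_pos
    exact lt_of_lt_of_le (by linarith) (le_of_lt hx.1)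
  have h1 : c * (π - π/2) ≤ ∫ x in Ioc (π/2) π, (1 - Real.cos (1 * x)) * x ^ (-1 - 2 * H) := by
    have hconst : ∫ _x in Ioc (π/2) π, c = c * (π - π/2) := by
      rw [setIntegral_const, smul_eq_mul, measureReal_def, Real.volume_Ioc,
        ENNReal.toReal_ofReal (by linarith [Real.pi_pos])]
      ring
    rw [← hconst]
    apply setIntegral_mono_on
    · exact (integrableOn_const_iff (by simp)).mpr (Or.inr (by rw [Real.volume_Ioc]; exact ENNReal.ofReal_lt_top))
    · exact hint.mono_set hsub
    · exact measurableSet_Ioc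
    · intro x hx
      have hx0 : 0 < x := hsub hx
      have hcosx : Real.cos x ≤ 0 :=
        Real.cos_nonpos_of_pi_div_two_le_of_le (le_of_lt hx.1)
          (by linarith [hx.2, Real.pi_pos])
      have h2 : c ≤ x ^ (-1 - 2 * H) := by
        rw [hc]
        exact Real.rpow_le_rpow_of_nonpos hx0 hx.2 (by linarith)
      have hcos1 : Real.cos (1 * x) ≤ 0 := by rwa [one_mul]
      calc c = 1 * c := (one_mul c).symm
        _ ≤ (1 - Real.cos (1 * x)) * x ^ (-1 - 2 * H) :=
            mul_le_mul (by linarith) h2 (le_of_lt hcpos) (by linarith)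
  have h2 : (∫ x in Ioc (π/2) π, (1 - Real.cos (1 * x)) * x ^ (-1 - 2 * H)) ≤ fbmK H 1 := by
    apply setIntegral_mono_set hint ?_ (HasSubset.Subset.eventuallyLE hsub)
    filter_upwards [ae_restrict_mem measurableSet_Ioi] with x hx
    exact mul_nonneg (one_sub_cos_nonneg _) (le_of_lt (Real.rpow_pos_of_pos hx _))
  have : 0 < c * (π - π/2) := by
    apply mul_pos hcpos; linarith [Real.pi_pos]
  calc (0:ℝ) < c * (π - π/2) := this
    _ ≤ _ := le_trans h1 h2

/-- The covariance of fractional Brownian motion is positive semidefinite. -/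
theorem fbmCov_posSemidef (H : ℝ) (hH0 : 0 < H) (hH1 : H < 1)
    (n : ℕ) (t : Fin n → ℝ) (ht : ∀ i, 0 ≤ t i) (c : Fin n → ℝ) :
    0 ≤ ∑ i, ∑ j, c i * c j * fbmCov H (t i) (t j) := by
  have hK1 := fbmK_one_pos H hH0 hH1
  have hcov : ∀ s u : ℝ, fbmCov H s u
      = (fbmK H s + fbmK H u - fbmK H (u - s)) / (2 * fbmK H 1) := by
    intro s u
    rw [fbmCov, fbmK_scale H hH0 s, fbmK_scale H hH0 u, fbmK_scale H hH0 (u - s)]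
    field_simp
  have hInt : ∀ u : ℝ,
      Integrable (fun x : ℝ => (1 - Real.cos (u * x)) * x ^ (-1 - 2 * H))
        (volume.restrict (Ioi 0)) := fun u => fbm_integrableOn H hH0 hH1 u
  set g : ℝ → ℝ → ℝ := fun u x => (1 - Real.cos (u * x)) * x ^ (-1 - 2 * H) with hg
  have hterm : ∀ i j : Fin n, Integrable
      (fun x : ℝ => c i * c j * (g (t i) x + g (t j) x - g (t j - t i) x))
      (volume.restrict (Ioi 0)) :=
    fun i j => (((hInt (t i)).add (hInt (t j))).sub (hInt (t j - t i))).const_mul _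
  have hone : ∀ i j : Fin n,
      (∫ x in Ioi (0:ℝ), c i * c j * (g (t i) x + g (t j) x - g (t j - t i) x))
        = c i * c j * (fbmK H (t i) + fbmK H (t j) - fbmK H (t j - t i)) := by
    intro i j
    have hadd : Integrable (fun x : ℝ => g (t i) x + g (t j) x)
        (volume.restrict (Ioi 0)) := (hInt (t i)).add (hInt (t j))
    rw [MeasureTheory.integral_const_mul,
      MeasureTheory.integral_sub hadd (hInt (t j - t i)),
      MeasureTheory.integral_add (hInt (t i)) (hInt (t j))]
    rfl
  have hsum : ∑ i, ∑ j, c i * c j * (fbmK H (t i) + fbmK H (t j) - fbmK H (t j - t i))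
      = ∫ x in Ioi (0:ℝ), ∑ i, ∑ j,
          c i * c j * (g (t i) x + g (t j) x - g (t j - t i) x) := by
    rw [MeasureTheory.integral_finset_sum _
      (fun i _ => integrable_finset_sum _ (fun j _ => hterm i j))]
    refine Finset.sum_congr rfl fun i _ => ?_
    rw [MeasureTheory.integral_finset_sum _ (fun j _ => hterm i j)]
    exact Finset.sum_congr rfl fun j _ => (hone i j).symm
  have hnonneg : 0 ≤ ∫ x in Ioi (0:ℝ), ∑ i, ∑ j,
      c i * c j * (g (t i) x + g (t j) x - g (t j - t i) x) := by
    apply setIntegral_nonneg measurableSet_Ioi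
    intro x hx
    have hx0 : (0:ℝ) < x := hx
    have hxp : (0:ℝ) ≤ x ^ (-1 - 2 * H) := le_of_lt (Real.rpow_pos_of_pos hx0 _)
    set f : Fin n → ℝ := fun i => c i * (1 - Real.cos (t i * x)) with hf
    set h : Fin n → ℝ := fun i => c i * Real.sin (t i * x) with hh
    have e1 : ∀ i j : Fin n, c i * c j * (g (t i) x + g (t j) x - g (t j - t i) x)
        = f i * f j * x ^ (-1 - 2 * H) + h i * h j * x ^ (-1 - 2 * H) := by
      intro i j
      have hsub : (t j - t i) * x = t j * x - t i * x := by ring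
      simp only [hg, hf, hh, hsub, Real.cos_sub]
      ring
    calc (0:ℝ) ≤ ((∑ i, f i) * (∑ i, f i) + (∑ i, h i) * (∑ i, h i)) * x ^ (-1 - 2 * H) := by
          have h1 : 0 ≤ (∑ i, f i) * (∑ i, f i) := mul_self_nonneg _
          have h2 : 0 ≤ (∑ i, h i) * (∑ i, h i) := mul_self_nonneg _
          exact mul_nonneg (by linarith) hxp
      _ = (∑ i, ∑ j, f i * f j) * x ^ (-1 - 2 * H)
            + (∑ i, ∑ j, h i * h j) * x ^ (-1 - 2 * H) := by
          rw [Finset.sum_mul_sum, Finset.sum_mul_sum, add_mul]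
      _ = ∑ i, ∑ j, c i * c j * (g (t i) x + g (t j) x - g (t j - t i) x) := by
          rw [Finset.sum_mul, Finset.sum_mul, ← Finset.sum_add_distrib]
          refine Finset.sum_congr rfl fun i _ => ?_
          rw [Finset.sum_mul, Finset.sum_mul, ← Finset.sum_add_distrib]
          exact Finset.sum_congr rfl fun j _ => (e1 i j).symm
  have hfinal : ∑ i, ∑ j, c i * c j * fbmCov H (t i) (t j)
      = (∑ i, ∑ j, c i * c j * (fbmK H (t i) + fbmK H (t j) - fbmK H (t j - t i)))
          / (2 * fbmK H 1) := by
    rw [Finset.sum_div]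
    refine Finset.sum_congr rfl fun i _ => ?_
    rw [Finset.sum_div]
    refine Finset.sum_congr rfl fun j _ => ?_
    rw [hcov]
    ring
  rw [hfinal, hsum]
  exact div_nonneg hnonneg (by linarith)
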